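/- Let n be a positive integer divisible by 2. Let D_1 and D_2 be sets of divisors of n with n ∉ D_1 and n ∉ D_2. If the integral circulant graphs ICG(n,D_1) and ICG(n,D_2) are isospectral, then n/2 does not belong to the symmetric difference D_1 △ D_2. -/

import Mathlib

open Finset

/-- `ω_n = exp(2πi/n)`. -/
noncomputable def omegaN (n : ℕ) : ℂ := Complex.exp (2 * Real.pi * Complex.I / n)

/-- `λ_k(S) = ∑_{g ∈ S} ω_n^{k g}`, the eigenvalues of the circulant graph `Cay(ℤ_n, S)`. -/
noncomputable def lam (n : ℕ) (S : Finset ℕ) (k : ℕ) : ℂ :=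
  ∑ g ∈ S, omegaN n ^ (k * g)

/-- The spectrum of `Cay(ℤ_n, S)`, i.e. the multiset `(λ_k(S))_{k ∈ [n]}`. -/
noncomputable def spec (n : ℕ) (S : Finset ℕ) : Multiset ℂ :=
  (Finset.Icc 1 n).val.map (lam n S)

/-- The connection set of `ICG(n, D)`:
`⋃_{d ∈ D} G_n(d) = {j ∈ [n] : gcd(j,n) ∈ D}` where `G_n(d) = {j ∈ [n] : gcd(j,n) = d}`. -/
def connSet (n : ℕ) (D : Finset ℕ) : Finset ℕ :=
  (Finset.Icc 1 n).filter (fun j => Nat.gcd j n ∈ D)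

/-- Orthogonality of roots of unity. -/
lemma orth_aux (n : ℕ) (hn : 0 < n) (g g' : ℕ) (hg : g ∈ Finset.Icc 1 n)
    (hg' : g' ∈ Finset.Icc 1 n) :
    ∑ k ∈ Finset.Icc 1 n, (omegaN n ^ g * (omegaN n ^ g')⁻¹) ^ k
      = if g = g' then (n : ℂ) else 0 := by
  have hprim : IsPrimitiveRoot (omegaN n) n := Complex.isPrimitiveRoot_exp n hn.ne'
  have hωn : omegaN n ^ n = 1 := hprim.pow_eq_one
  set ζ : ℂ := omegaN n ^ g * (omegaN n ^ g')⁻¹ with hζ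
  have hζn : ζ ^ n = 1 := by
    have h1 : (omegaN n ^ g) ^ n = 1 := by rw [← pow_mul, mul_comm, pow_mul, hωn, one_pow]
    have h2 : ((omegaN n ^ g')⁻¹) ^ n = 1 := by
      rw [inv_pow, ← pow_mul, mul_comm, pow_mul, hωn, one_pow, inv_one]
    rw [hζ, mul_pow, h1, h2, mul_one]
  by_cases h : g = g'
  · subst h
    have hne : omegaN n ^ g ≠ 0 := pow_ne_zero _ (hprim.ne_zero hn.ne')
    simp [hζ, mul_inv_cancel₀ hne]
  · rw [if_neg h]
    have hζ1 : ζ ≠ 1 := by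
      intro h1
      apply h
      have hne : omegaN n ^ g' ≠ 0 := pow_ne_zero _ (hprim.ne_zero hn.ne')
      have : omegaN n ^ g = omegaN n ^ g' := by
        rw [hζ, mul_inv_eq_one₀ hne] at h1; exact h1
      have hmod : ∀ m : ℕ, omegaN n ^ m = omegaN n ^ (m % n) := by
        intro m
        conv_lhs => rw [← Nat.div_add_mod m n]
        rw [pow_add, pow_mul, hωn, one_pow, one_mul]
      rw [hmod g, hmod g'] at this
      have := hprim.pow_inj (Nat.mod_lt _ hn) (Nat.mod_lt _ hn) this
      simp only [mem_Icc] at hg hg'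
      rcases eq_or_lt_of_le hg.2 with h1 | h1 <;> rcases eq_or_lt_of_le hg'.2 with h2 | h2
      · omega
      · rw [h1, Nat.mod_self, Nat.mod_eq_of_lt h2] at this; omega
      · rw [h2, Nat.mod_self, Nat.mod_eq_of_lt h1] at this; omega
      · rw [Nat.mod_eq_of_lt h1, Nat.mod_eq_of_lt h2] at this; exact this
    rw [show Finset.Icc 1 n = Finset.Ico 1 (n+1) by rfl, Finset.sum_Ico_eq_sum_range]
    simp only [Nat.add_sub_cancel]
    have : ∀ i, ζ ^ (1 + i) = ζ * ζ ^ i := by intro i; rw [pow_add, pow_one]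
    rw [Finset.sum_congr rfl fun i _ => this i, ← Finset.mul_sum, geom_sum_eq hζ1, hζn]
    simp

/-- Summing `λ_k · conj(λ_k)` over `k ∈ [n]` yields `n · |S|`. -/
lemma sum_lam_mul_conj (n : ℕ) (hn : 0 < n) (S : Finset ℕ) (hS : S ⊆ Finset.Icc 1 n) :
    ∑ k ∈ Finset.Icc 1 n, lam n S k * (starRingEnd ℂ) (lam n S k) = (n : ℂ) * S.card := by
  have hprim : IsPrimitiveRoot (omegaN n) n := Complex.isPrimitiveRoot_exp n hn.ne'
  have hconj : (starRingEnd ℂ) (omegaN n) = (omegaN n)⁻¹ := by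
    rw [omegaN, ← Complex.exp_conj, ← Complex.exp_neg]
    congr 1
    simp only [map_div₀, map_mul, Complex.conj_I, Complex.conj_ofReal, map_ofNat,
      map_natCast]
    ring
  have step : ∀ k, lam n S k * (starRingEnd ℂ) (lam n S k)
      = ∑ g ∈ S, ∑ g' ∈ S, (omegaN n ^ g * (omegaN n ^ g')⁻¹) ^ k := by
    intro k
    rw [lam, map_sum, Finset.sum_mul_sum]
    refine Finset.sum_congr rfl fun g hg => Finset.sum_congr rfl fun g' hg' => ?_
    rw [map_pow, hconj]
    rw [mul_pow, ← pow_mul, mul_comm g k, inv_pow, inv_pow, ← pow_mul, mul_comm g' k]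
  rw [Finset.sum_congr rfl fun k _ => step k, Finset.sum_comm]
  have : ∀ g ∈ S, (∑ k ∈ Finset.Icc 1 n, ∑ g' ∈ S,
      (omegaN n ^ g * (omegaN n ^ g')⁻¹) ^ k) = (n : ℂ) := by
    intro g hg
    rw [Finset.sum_comm]
    have inner : ∀ g' ∈ S, (∑ k ∈ Finset.Icc 1 n, (omegaN n ^ g * (omegaN n ^ g')⁻¹) ^ k)
        = if g = g' then (n : ℂ) else 0 := fun g' hg' =>
      orth_aux n hn g g' (hS hg) (hS hg')
    rw [Finset.sum_congr rfl inner, Finset.sum_ite_eq S g (fun _ => (n : ℂ)), if_pos hg]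
  rw [Finset.sum_congr rfl this, Finset.sum_const, nsmul_eq_mul, mul_comm]

lemma card_eq_of_spec_eq (n : ℕ) (hn : 0 < n) (S₁ S₂ : Finset ℕ)
    (h₁ : S₁ ⊆ Finset.Icc 1 n) (h₂ : S₂ ⊆ Finset.Icc 1 n)
    (hspec : spec n S₁ = spec n S₂) : S₁.card = S₂.card := by
  have key : ((spec n S₁).map (fun z => z * (starRingEnd ℂ) z)).sum
      = ((spec n S₂).map (fun z => z * (starRingEnd ℂ) z)).sum := by rw [hspec]
  have expand : ∀ S : Finset ℕ, ((spec n S).map (fun z => z * (starRingEnd ℂ) z)).sum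
      = ∑ k ∈ Finset.Icc 1 n, lam n S k * (starRingEnd ℂ) (lam n S k) := by
    intro S
    rw [spec, Multiset.map_map]
    rfl
  rw [expand, expand, sum_lam_mul_conj n hn S₁ h₁, sum_lam_mul_conj n hn S₂ h₂] at key
  have : (S₁.card : ℂ) = (S₂.card : ℂ) :=
    mul_left_cancel₀ (by exact_mod_cast hn.ne') key
  exact_mod_cast this

lemma half_mem_connSet_iff (n : ℕ) (hn : 0 < n) (h2 : 2 ∣ n) (D : Finset ℕ) :
    n / 2 ∈ connSet n D ↔ n / 2 ∈ D := by
  have hdvd : n / 2 ∣ n := ⟨2, by omega⟩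
  have hgcd : Nat.gcd (n / 2) n = n / 2 := Nat.gcd_eq_left hdvd
  simp only [connSet, Finset.mem_filter, Finset.mem_Icc, hgcd]
  constructor
  · tauto
  · intro h; exact ⟨⟨by omega, by omega⟩, h⟩

/-- Parity of the connection set cardinality detects `n/2 ∈ D`. -/
lemma card_connSet_parity (n : ℕ) (hn : 0 < n) (h2 : 2 ∣ n) (D : Finset ℕ)
    (hnD : n ∉ D) :
    ((connSet n D).card : ZMod 2) = if n / 2 ∈ D then 1 else 0 := by
  classical
  set S := connSet n D with hSdef
  have hmem : ∀ j ∈ S, 1 ≤ j ∧ j < n ∧ Nat.gcd j n ∈ D := by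
    intro j hj
    simp only [hSdef, connSet, Finset.mem_filter, Finset.mem_Icc] at hj
    refine ⟨hj.1.1, ?_, hj.2⟩
    rcases eq_or_lt_of_le hj.1.2 with h | h
    · exfalso; rw [h, Nat.gcd_self] at hj; exact hnD hj.2
    · exact h
  have hsplit := Finset.card_filter_add_card_filter_not
    (s := S) (p := fun j => j = n / 2)
  have heven : ((S.filter (fun j => ¬ j = n / 2)).card : ZMod 2) = 0 := by
    have hsum : ∑ _j ∈ S.filter (fun j => ¬ j = n / 2), (1 : ZMod 2) = 0 := by
      refine Finset.sum_involution (fun a _ => n - a) (fun a ha => by decide)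
        (fun a ha _ => ?_) (fun a ha => ?_) (fun a ha => ?_)
      · simp only [Finset.mem_filter] at ha
        have h3 := hmem a ha.1
        have h4 := ha.2
        show n - a ≠ a
        omega
      · simp only [Finset.mem_filter] at ha ⊢
        have h3 := hmem a ha.1
        constructor
        · show n - a ∈ S
          simp only [hSdef, connSet, Finset.mem_filter, Finset.mem_Icc]
          refine ⟨⟨by omega, by omega⟩, ?_⟩
          rw [Nat.gcd_self_sub_left (by omega)]
          exact h3.2.2
        · show ¬ n - a = n / 2
          have h4 := ha.2; omega
      · simp only [Finset.mem_filter] at ha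
        have h3 := hmem a ha.1
        show n - (n - a) = a
        omega
    rwa [Finset.sum_const, nsmul_eq_mul, mul_one] at hsum
  have hone : (S.filter (fun j => j = n / 2)).card = if n / 2 ∈ D then 1 else 0 := by
    have : S.filter (fun j => j = n / 2) = if n / 2 ∈ S then {n / 2} else ∅ := by
      rw [← Finset.filter_eq' S (n / 2)]
    rw [this]
    by_cases h : n / 2 ∈ D
    · rw [if_pos ((half_mem_connSet_iff n hn h2 D).2 h), if_pos h, Finset.card_singleton]
    · rw [if_neg (fun hc => h ((half_mem_connSet_iff n hn h2 D).1 hc)), if_neg h,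
        Finset.card_empty]
  have : (S.card : ZMod 2) = ((S.filter (fun j => j = n / 2)).card : ZMod 2)
      + ((S.filter (fun j => ¬ j = n / 2)).card : ZMod 2) := by
    rw [← Nat.cast_add, hsplit]
  rw [this, heven, add_zero, hone]
  by_cases h : n / 2 ∈ D <;> simp [h]

/-- For even `n`, if the integral circulant graphs are isospectral then `n/2` does not lie in
the symmetric difference of the divisor sets. -/
theorem half_not_mem_symmDiff
    (n : ℕ) (hn : 0 < n) (h2 : 2 ∣ n)
    (D₁ D₂ : Finset ℕ)
    (hD₁ : D₁ ⊆ n.divisors) (hD₂ : D₂ ⊆ n.divisors)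
    (hn₁ : n ∉ D₁) (hn₂ : n ∉ D₂)
    (hspec : spec n (connSet n D₁) = spec n (connSet n D₂)) :
    n / 2 ∉ (D₁ \ D₂) ∪ (D₂ \ D₁) := by
  have hsub : ∀ D : Finset ℕ, connSet n D ⊆ Finset.Icc 1 n := fun D =>
    Finset.filter_subset _ _
  have hcard : (connSet n D₁).card = (connSet n D₂).card :=
    card_eq_of_spec_eq n hn _ _ (hsub D₁) (hsub D₂) hspec
  have hpar : (if n / 2 ∈ D₁ then (1 : ZMod 2) else 0) = if n / 2 ∈ D₂ then 1 else 0 := by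
    rw [← card_connSet_parity n hn h2 D₁ hn₁, ← card_connSet_parity n hn h2 D₂ hn₂, hcard]
  have hiff : n / 2 ∈ D₁ ↔ n / 2 ∈ D₂ := by
    by_cases h1 : n / 2 ∈ D₁ <;> by_cases h2' : n / 2 ∈ D₂ <;>
      simp [h1, h2'] at hpar ⊢
  simp only [Finset.mem_union, Finset.mem_sdiff]
  tauto
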